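/- Let (ν_t, μ_t)_{t≥0} be the solution of the Fisher-Rao gradient flow system ∂_t ν_t = −a(ν_t,μ_t,·)ν_t, ∂_t μ_t = b(ν_t,μ_t,·)μ_t under the boundedness assumptions |δF/δν| ≤ C_ν, |δF/δμ| ≤ C_μ and bounded second-order flat derivatives, and suppose the initial condition satisfies both the upper ratio bounds sup ν₀/π ≤ R_ν, sup μ₀/ρ ≤ R_μ (R_ν, R_μ > 1) and the lower ratio bounds inf_x ν₀(x)/π(x) ≥ r_ν, inf_y μ₀(y)/ρ(y) ≥ r_μ for some r_ν, r_μ > 0. Then there exist constants r_{1,ν}, r_{1,μ} > 0 such that for all t > 0: inf_x ν_t(x)/π(x) ≥ r_{1,ν} and inf_y μ_t(y)/ρ(y) ≥ r_{1,μ}. -/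

import Mathlib

open MeasureTheory Real Set

noncomputable section

abbrev Euc (d : ℕ) : Type := EuclideanSpace ℝ (Fin d)

/-- `f` is a probability density on `X ⊆ ℝ^d` (w.r.t. Lebesgue measure). -/
def IsPD {d : ℕ} (X : Set (Euc d)) (f : Euc d → ℝ) : Prop :=
  (∀ x, 0 ≤ f x) ∧ MeasureTheory.IntegrableOn f X ∧ (∫ x in X, f x) = 1

/-- Relative entropy `D_KL(f‖g)` of densities on `X`. -/
def KL {d : ℕ} (X : Set (Euc d)) (f g : Euc d → ℝ) : ℝ :=
  ∫ x in X, Real.log (f x / g x) * f x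

/-- Total variation distance between densities on `X`. -/
def TVd {d : ℕ} (X : Set (Euc d)) (f g : Euc d → ℝ) : ℝ :=
  (1 / 2) * ∫ x in X, |f x - g x|

/-- The entropy-regularized payoff `V^σ`. -/
def Vsig {d : ℕ} (X Y : Set (Euc d)) (σ : ℝ) (pp ρ : Euc d → ℝ)
    (F : (Euc d → ℝ) → (Euc d → ℝ) → ℝ) (ν μ : Euc d → ℝ) : ℝ :=
  F ν μ + σ ^ 2 / 2 * (KL X ν pp - KL Y μ ρ)

/-- `a(ν,μ,x) = δF/δν(ν,μ,x) + (σ²/2) log(ν(x)/pp(x)) − (σ²/2) D_KL(ν|pp)`. -/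
def aFun {d : ℕ} (X : Set (Euc d)) (σ : ℝ) (pp : Euc d → ℝ)
    (DFν : (Euc d → ℝ) → (Euc d → ℝ) → Euc d → ℝ)
    (ν μ : Euc d → ℝ) (x : Euc d) : ℝ :=
  DFν ν μ x + σ ^ 2 / 2 * Real.log (ν x / pp x) - σ ^ 2 / 2 * KL X ν pp

/-- `b(ν,μ,y) = δF/δμ(ν,μ,y) − (σ²/2) log(μ(y)/ρ(y)) + (σ²/2) D_KL(μ|ρ)`. -/
def bFun {d : ℕ} (Y : Set (Euc d)) (σ : ℝ) (ρ : Euc d → ℝ)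
    (DFμ : (Euc d → ℝ) → (Euc d → ℝ) → Euc d → ℝ)
    (ν μ : Euc d → ℝ) (y : Euc d) : ℝ :=
  DFμ ν μ y - σ ^ 2 / 2 * Real.log (μ y / ρ y) + σ ^ 2 / 2 * KL Y μ ρ

/-- `DFν` is the (normalized) flat derivative of `F` in its first argument. -/
def IsFlatDerivNu {d : ℕ} (X Y : Set (Euc d))
    (F : (Euc d → ℝ) → (Euc d → ℝ) → ℝ)
    (DFν : (Euc d → ℝ) → (Euc d → ℝ) → Euc d → ℝ) : Prop :=
  (∀ ν ν' μ, IsPD X ν → IsPD X ν' → IsPD Y μ →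
    F ν' μ - F ν μ =
      ∫ ε in (0:ℝ)..1, ∫ x in X,
        DFν (fun z => ν z + ε * (ν' z - ν z)) μ x * (ν' x - ν x)) ∧
  (∀ ν μ, IsPD X ν → IsPD Y μ → (∫ x in X, DFν ν μ x * ν x) = 0)

/-- `DFμ` is the (normalized) flat derivative of `F` in its second argument. -/
def IsFlatDerivMu {d : ℕ} (X Y : Set (Euc d))
    (F : (Euc d → ℝ) → (Euc d → ℝ) → ℝ)
    (DFμ : (Euc d → ℝ) → (Euc d → ℝ) → Euc d → ℝ) : Prop :=
  (∀ ν μ μ', IsPD X ν → IsPD Y μ → IsPD Y μ' →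
    F ν μ' - F ν μ =
      ∫ ε in (0:ℝ)..1, ∫ y in Y,
        DFμ ν (fun z => μ z + ε * (μ' z - μ z)) y * (μ' y - μ y)) ∧
  (∀ ν μ, IsPD X ν → IsPD Y μ → (∫ y in Y, DFμ ν μ y * μ y) = 0)

/-- The four second-order flat derivatives of `F`, given first-order flat
derivatives `DFν`, `DFμ`: each satisfies the defining first-order expansion. -/
def IsSecondFlatDeriv {d : ℕ} (X Y : Set (Euc d))
    (DFν DFμ : (Euc d → ℝ) → (Euc d → ℝ) → Euc d → ℝ)
    (D2νν D2μν D2μμ D2νμ : (Euc d → ℝ) → (Euc d → ℝ) → Euc d → Euc d → ℝ) : Prop :=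
  (∀ ν ν' μ, IsPD X ν → IsPD X ν' → IsPD Y μ → ∀ x,
    DFν ν' μ x - DFν ν μ x =
      ∫ ε in (0:ℝ)..1, ∫ z in X,
        D2νν (fun w => ν w + ε * (ν' w - ν w)) μ x z * (ν' z - ν z)) ∧
  (∀ ν μ μ', IsPD X ν → IsPD Y μ → IsPD Y μ' → ∀ x,
    DFν ν μ' x - DFν ν μ x =
      ∫ ε in (0:ℝ)..1, ∫ w in Y,
        D2μν ν (fun z => μ z + ε * (μ' z - μ z)) x w * (μ' w - μ w)) ∧
  (∀ ν μ μ', IsPD X ν → IsPD Y μ → IsPD Y μ' → ∀ y,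
    DFμ ν μ' y - DFμ ν μ y =
      ∫ ε in (0:ℝ)..1, ∫ w in Y,
        D2μμ ν (fun z => μ z + ε * (μ' z - μ z)) y w * (μ' w - μ w)) ∧
  (∀ ν ν' μ, IsPD X ν → IsPD X ν' → IsPD Y μ → ∀ y,
    DFμ ν' μ y - DFμ ν μ y =
      ∫ ε in (0:ℝ)..1, ∫ z in X,
        D2νμ (fun w => ν w + ε * (ν' w - ν w)) μ y z * (ν' z - ν z))

/-- Uniform bounds on the four second-order flat derivatives. -/
def SecondDerivBounded {d : ℕ} (X Y : Set (Euc d))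
    (D2νν D2μν D2μμ D2νμ : (Euc d → ℝ) → (Euc d → ℝ) → Euc d → Euc d → ℝ)
    (Cνν Cμν Cμμ Cνμ : ℝ) : Prop :=
  ∀ ν μ, IsPD X ν → IsPD Y μ →
    (∀ x ∈ X, ∀ z ∈ X, |D2νν ν μ x z| ≤ Cνν) ∧
    (∀ x ∈ X, ∀ w ∈ Y, |D2μν ν μ x w| ≤ Cμν) ∧
    (∀ y ∈ Y, ∀ w ∈ Y, |D2μμ ν μ y w| ≤ Cμμ) ∧
    (∀ y ∈ Y, ∀ z ∈ X, |D2νμ ν μ y z| ≤ Cνμ)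

/-- Uniform bounds on the first-order flat derivatives. -/
def FirstDerivBounded {d : ℕ} (X Y : Set (Euc d))
    (DFν DFμ : (Euc d → ℝ) → (Euc d → ℝ) → Euc d → ℝ) (Cν Cμ : ℝ) : Prop :=
  ∀ ν μ, IsPD X ν → IsPD Y μ →
    (∀ x ∈ X, |DFν ν μ x| ≤ Cν) ∧ (∀ y ∈ Y, |DFμ ν μ y| ≤ Cμ)

/-- `(ν, μ)` is a (time-differentiable) solution of the Fisher–Rao gradient
flow system `∂_t ν_t = −a(ν_t,μ_t,·) ν_t`, `∂_t μ_t = b(ν_t,μ_t,·) μ_t`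
with initial condition `(ν₀, μ₀)`. -/
def IsFRFlow {d : ℕ} (X Y : Set (Euc d)) (σ : ℝ) (pp ρ : Euc d → ℝ)
    (DFν DFμ : (Euc d → ℝ) → (Euc d → ℝ) → Euc d → ℝ)
    (ν₀ μ₀ : Euc d → ℝ) (ν μ : ℝ → Euc d → ℝ) : Prop :=
  ν 0 = ν₀ ∧ μ 0 = μ₀ ∧
  (∀ t, 0 ≤ t → IsPD X (ν t) ∧ IsPD Y (μ t)) ∧
  (∀ x, ContinuousOn (fun s => ν s x) (Ici 0)) ∧
  (∀ y, ContinuousOn (fun s => μ s y) (Ici 0)) ∧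
  (∀ x t, 0 ≤ t → HasDerivWithinAt (fun s => ν s x)
      (-(aFun X σ pp DFν (ν t) (μ t) x) * ν t x) (Ici 0) t) ∧
  (∀ y t, 0 ≤ t → HasDerivWithinAt (fun s => μ s y)
      ((bFun Y σ ρ DFμ (ν t) (μ t) y) * μ t y) (Ici 0) t)

/-- The Nikaidò–Isoda error for the game `V^σ`. -/
def NIerr {d : ℕ} (X Y : Set (Euc d)) (σ : ℝ) (pp ρ : Euc d → ℝ)
    (F : (Euc d → ℝ) → (Euc d → ℝ) → ℝ) (ν μ : Euc d → ℝ) : ℝ :=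
  sSup {r : ℝ | ∃ μ', IsPD Y μ' ∧ r = Vsig X Y σ pp ρ F ν μ'} -
    sInf {r : ℝ | ∃ ν', IsPD X ν' ∧ r = Vsig X Y σ pp ρ F ν' μ}


/-- Pointwise: `log(f/g)·f + g ≥ 0` for nonnegative reals (with Lean's
conventions `x/0 = 0`, `log 0 = 0`). -/
lemma aux_pointwise_kl (a b : ℝ) (ha : 0 ≤ a) (hb : 0 ≤ b) :
    -b ≤ Real.log (a / b) * a := by
  rcases eq_or_lt_of_le ha with h | h
  · simp [← h]; linarith
  rcases eq_or_lt_of_le hb with h' | h'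
  · simp [← h']
  have h1 : Real.log (b / a) ≤ b / a - 1 := Real.log_le_sub_one_of_pos (by positivity)
  have h2 : Real.log (a / b) = - Real.log (b / a) := by
    rw [← Real.log_inv]; congr 1; field_simp
  have h3 : 1 - b / a ≤ Real.log (a / b) := by rw [h2]; linarith
  have h4 : (1 - b / a) * a ≤ Real.log (a / b) * a :=
    mul_le_mul_of_nonneg_right h3 ha
  have h5 : (1 - b / a) * a = a - b := by field_simp
  linarith

/-- `KL` is bounded below by `-1` for probability densities. -/
lemma aux_KL_ge_neg_one {d : ℕ} (X : Set (Euc d)) (f g : Euc d → ℝ)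
    (hf : IsPD X f) (hg : IsPD X g) : -1 ≤ KL X f g := by
  unfold KL
  by_cases hI : MeasureTheory.IntegrableOn (fun x => Real.log (f x / g x) * f x) X
  · have hmono : (fun x => -g x) ≤ fun x => Real.log (f x / g x) * f x := fun x =>
      aux_pointwise_kl (f x) (g x) (hf.1 x) (hg.1 x)
    have := MeasureTheory.integral_mono (μ := MeasureTheory.volume.restrict X)
      hg.2.1.neg hI hmono
    simp only [Pi.neg_apply, MeasureTheory.integral_neg] at this
    have h1 : (∫ x in X, g x) = 1 := hg.2.2
    rw [h1] at this
    exact this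
  · rw [MeasureTheory.integral_undef hI]; norm_num

/-- Barrier lemma: if `g` starts above `c`, is continuous on `[0,∞)`, and has
nonnegative one-sided derivative whenever `g t ≤ c`, then `g` stays above `c`. -/
lemma aux_forward_invariant (g : ℝ → ℝ) (c : ℝ)
    (hcont : ContinuousOn g (Ici 0))
    (hg0 : c ≤ g 0)
    (hD : ∀ t, 0 ≤ t → ∃ D, HasDerivWithinAt g D (Ici 0) t ∧ (g t ≤ c → 0 ≤ D)) :
    ∀ t, 0 ≤ t → c ≤ g t := by
  intro t₁ ht₁
  by_contra hgt
  push_neg at hgt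
  set S : Set ℝ := {u | u ∈ Icc (0:ℝ) t₁ ∧ c ≤ g u} with hS
  have hS0 : (0:ℝ) ∈ S := ⟨⟨le_refl 0, ht₁⟩, hg0⟩
  have hSne : S.Nonempty := ⟨0, hS0⟩
  have hSbdd : BddAbove S := ⟨t₁, fun u hu => hu.1.2⟩
  have hIccsub : Icc (0:ℝ) t₁ ⊆ Ici 0 := fun u hu => hu.1
  have hclosed : IsClosed S := by
    have : S = Icc (0:ℝ) t₁ ∩ g ⁻¹' (Ici c) := by
      ext u; simp [hS, Set.mem_Icc, and_assoc]
    rw [this]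
    exact (hcont.mono hIccsub).preimage_isClosed_of_isClosed isClosed_Icc isClosed_Ici
  set s := sSup S with hs
  have hsS : s ∈ S := hclosed.csSup_mem hSne hSbdd
  have hs0 : 0 ≤ s := hsS.1.1
  have hst₁ : s ≤ t₁ := hsS.1.2
  have hgs : c ≤ g s := hsS.2
  have hsne : s ≠ t₁ := by
    intro h; rw [h] at hgs; linarith
  have hslt : s < t₁ := lt_of_le_of_ne hst₁ hsne
  -- on (s, t₁], g < c
  have hlt : ∀ u, s < u → u ≤ t₁ → g u < c := by
    intro u hu hu'
    by_contra h
    push_neg at h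
    have : u ∈ S := ⟨⟨le_trans hs0 hu.le, hu'⟩, h⟩
    exact absurd (le_csSup hSbdd this) (not_le.mpr hu)
  -- g is monotone on [s, t₁]
  have hmono : MonotoneOn g (Icc s t₁) := by
    apply monotoneOn_of_deriv_nonneg (convex_Icc s t₁)
      (hcont.mono (fun u hu => le_trans hs0 hu.1))
    · intro u hu
      rw [interior_Icc] at hu
      have hu0 : 0 < u := lt_of_le_of_lt hs0 hu.1
      obtain ⟨D, hDu, _⟩ := hD u hu0.le
      exact ((hDu.hasDerivAt (Ici_mem_nhds hu0)).differentiableAt).differentiableWithinAt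
    · intro u hu
      rw [interior_Icc] at hu
      have hu0 : 0 < u := lt_of_le_of_lt hs0 hu.1
      obtain ⟨D, hDu, hDnn⟩ := hD u hu0.le
      have hda : HasDerivAt g D u := hDu.hasDerivAt (Ici_mem_nhds hu0)
      rw [hda.deriv]
      exact hDnn (hlt u hu.1 hu.2.le).le
  have := hmono ⟨le_refl s, hslt.le⟩ ⟨hslt.le, le_refl t₁⟩ hslt.le
  linarith

/-- Arithmetic: the drift is nonnegative once the log-ratio is low enough. -/
lemma aux_arith (σ C L K Dv : ℝ) (hσ : 0 < σ) (hC : 0 ≤ C)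
    (hL : L ≤ -(2 * C / σ ^ 2 + 1)) (hDv : |Dv| ≤ C) (hK : -1 ≤ K) :
    0 ≤ -(Dv + σ ^ 2 / 2 * L - σ ^ 2 / 2 * K) := by
  have hσ2 : (0:ℝ) < σ ^ 2 := by positivity
  have h1 : -C ≤ -Dv := by have := (abs_le.mp hDv).2; linarith
  have h2 : σ ^ 2 / 2 * L ≤ σ ^ 2 / 2 * (-(2 * C / σ ^ 2 + 1)) :=
    mul_le_mul_of_nonneg_left hL (by positivity)
  have h3 : σ ^ 2 / 2 * (-(2 * C / σ ^ 2 + 1)) = -(C + σ ^ 2 / 2) := by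
    field_simp
  have h4 : σ ^ 2 / 2 * (-1) ≤ σ ^ 2 / 2 * K :=
    mul_le_mul_of_nonneg_left hK (by positivity)
  nlinarith

/-- lower ratio bounds along the Fisher–Rao flow. -/
theorem FRflow_lower_ratio_bounds {d : ℕ} (X Y : Set (Euc d))
    (σ : ℝ) (hσ : 0 < σ)
    (pp ρ : Euc d → ℝ) (hpp : IsPD X pp) (hρ : IsPD Y ρ)
    (F : (Euc d → ℝ) → (Euc d → ℝ) → ℝ)
    (DFν DFμ : (Euc d → ℝ) → (Euc d → ℝ) → Euc d → ℝ)
    (hflatν : IsFlatDerivNu X Y F DFν) (hflatμ : IsFlatDerivMu X Y F DFμ)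
    (Cν Cμ : ℝ) (hCν : 0 < Cν) (hCμ : 0 < Cμ)
    (hb1 : FirstDerivBounded X Y DFν DFμ Cν Cμ)
    (D2νν D2μν D2μμ D2νμ : (Euc d → ℝ) → (Euc d → ℝ) → Euc d → Euc d → ℝ)
    (h2 : IsSecondFlatDeriv X Y DFν DFμ D2νν D2μν D2μμ D2νμ)
    (Cνν Cμν Cμμ Cνμ : ℝ)
    (hb2 : SecondDerivBounded X Y D2νν D2μν D2μμ D2νμ Cνν Cμν Cμμ Cνμ)
    (ν₀ μ₀ : Euc d → ℝ) (hν₀ : IsPD X ν₀) (hμ₀ : IsPD Y μ₀)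
    (Rν Rμ : ℝ) (hRν : 1 < Rν) (hRμ : 1 < Rμ)
    (hupν : ∀ x ∈ X, ν₀ x ≤ Rν * pp x) (hupμ : ∀ y ∈ Y, μ₀ y ≤ Rμ * ρ y)
    (rν rμ : ℝ) (hrν : 0 < rν) (hrμ : 0 < rμ)
    (hloν : ∀ x ∈ X, rν * pp x ≤ ν₀ x) (hloμ : ∀ y ∈ Y, rμ * ρ y ≤ μ₀ y)
    (nuf muf : ℝ → Euc d → ℝ)
    (hflow : IsFRFlow X Y σ pp ρ DFν DFμ ν₀ μ₀ nuf muf)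
    :
    ∃ r1ν > (0:ℝ), ∃ r1μ > (0:ℝ), ∀ t, 0 < t →
      (∀ x ∈ X, r1ν * pp x ≤ nuf t x) ∧ (∀ y ∈ Y, r1μ * ρ y ≤ muf t y) := by
  
  classical
  obtain ⟨hn0, hm0, hPD, hcontν, hcontμ, hdν, hdμ⟩ := hflow
  set c₀ : ℝ := min rν (Real.exp (-(2 * Cν / σ ^ 2 + 1))) with hc₀
  set c₁ : ℝ := min rμ (Real.exp (-(2 * Cμ / σ ^ 2 + 1))) with hc₁
  have hc₀pos : 0 < c₀ := lt_min hrν (Real.exp_pos _)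
  have hc₁pos : 0 < c₁ := lt_min hrμ (Real.exp_pos _)
  refine ⟨c₀, hc₀pos, c₁, hc₁pos, fun t ht => ⟨?_, ?_⟩⟩
  · -- ν side
    intro x hx
    have hppx : 0 ≤ pp x := hpp.1 x
    rcases eq_or_lt_of_le hppx with hpp0 | hpp0
    · rw [← hpp0, mul_zero]; exact (hPD t ht.le).1.1 x
    · refine aux_forward_invariant (fun s => nuf s x) (c₀ * pp x) (hcontν x) ?_ ?_ t ht.le
      · simp only [hn0]
        calc c₀ * pp x ≤ rν * pp x :=
              mul_le_mul_of_nonneg_right (min_le_left _ _) hppx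
          _ ≤ ν₀ x := hloν x hx
      · intro u hu
        refine ⟨-(aFun X σ pp DFν (nuf u) (muf u) x) * nuf u x, hdν x u hu, ?_⟩
        intro hle
        have hnn : 0 ≤ nuf u x := (hPD u hu).1.1 x
        rcases eq_or_lt_of_le hnn with h0 | h0
        · rw [← h0, mul_zero]
        · have hratio : nuf u x / pp x ≤ c₀ := by
            rw [div_le_iff₀ hpp0]
            calc nuf u x ≤ c₀ * pp x := hle
              _ = c₀ * pp x := rfl
          have hratiopos : 0 < nuf u x / pp x := by positivity
          have hL : Real.log (nuf u x / pp x) ≤ -(2 * Cν / σ ^ 2 + 1) := by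
            calc Real.log (nuf u x / pp x) ≤ Real.log c₀ :=
                  Real.log_le_log hratiopos hratio
              _ ≤ Real.log (Real.exp (-(2 * Cν / σ ^ 2 + 1))) :=
                  Real.log_le_log hc₀pos (min_le_right _ _)
              _ = -(2 * Cν / σ ^ 2 + 1) := Real.log_exp _
          have hDv : |DFν (nuf u) (muf u) x| ≤ Cν :=
            (hb1 (nuf u) (muf u) (hPD u hu).1 (hPD u hu).2).1 x hx
          have hK : -1 ≤ KL X (nuf u) pp :=
            aux_KL_ge_neg_one X (nuf u) pp (hPD u hu).1 hpp
          have h := aux_arith σ Cν (Real.log (nuf u x / pp x)) (KL X (nuf u) pp)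
            (DFν (nuf u) (muf u) x) hσ hCν.le hL hDv hK
          unfold aFun
          exact mul_nonneg h hnn
  · -- μ side
    intro y hy
    have hρy : 0 ≤ ρ y := hρ.1 y
    rcases eq_or_lt_of_le hρy with hρ0 | hρ0
    · rw [← hρ0, mul_zero]; exact (hPD t ht.le).2.1 y
    · refine aux_forward_invariant (fun s => muf s y) (c₁ * ρ y) (hcontμ y) ?_ ?_ t ht.le
      · simp only [hm0]
        calc c₁ * ρ y ≤ rμ * ρ y :=
              mul_le_mul_of_nonneg_right (min_le_left _ _) hρy
          _ ≤ μ₀ y := hloμ y hy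
      · intro u hu
        refine ⟨(bFun Y σ ρ DFμ (nuf u) (muf u) y) * muf u y, hdμ y u hu, ?_⟩
        intro hle
        have hnn : 0 ≤ muf u y := (hPD u hu).2.1 y
        rcases eq_or_lt_of_le hnn with h0 | h0
        · rw [← h0, mul_zero]
        · have hratio : muf u y / ρ y ≤ c₁ := by
            rw [div_le_iff₀ hρ0]; exact hle
          have hratiopos : 0 < muf u y / ρ y := by positivity
          have hL : Real.log (muf u y / ρ y) ≤ -(2 * Cμ / σ ^ 2 + 1) := by
            calc Real.log (muf u y / ρ y) ≤ Real.log c₁ :=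
                  Real.log_le_log hratiopos hratio
              _ ≤ Real.log (Real.exp (-(2 * Cμ / σ ^ 2 + 1))) :=
                  Real.log_le_log hc₁pos (min_le_right _ _)
              _ = -(2 * Cμ / σ ^ 2 + 1) := Real.log_exp _
          have hDv : |DFμ (nuf u) (muf u) y| ≤ Cμ :=
            (hb1 (nuf u) (muf u) (hPD u hu).1 (hPD u hu).2).2 y hy
          have hK : -1 ≤ KL Y (muf u) ρ :=
            aux_KL_ge_neg_one Y (muf u) ρ (hPD u hu).2 hρ
          have h := aux_arith σ Cμ (Real.log (muf u y / ρ y)) (KL Y (muf u) ρ)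
            (-(DFμ (nuf u) (muf u) y)) hσ hCμ.le hL (by rwa [abs_neg]) hK
          unfold bFun
          -- b = DFμ - σ²/2 L + σ²/2 K = -(DFμ? ) careful with signs
          have hb : 0 ≤ DFμ (nuf u) (muf u) y - σ ^ 2 / 2 * Real.log (muf u y / ρ y)
              + σ ^ 2 / 2 * KL Y (muf u) ρ := by linarith
          exact mul_nonneg hb hnn
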